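/- arXiv:2101.02968 — 3 statements merged into one kernel-verified Lean document; each statement's English description precedes it below -/
import Mathlib

section
/- For binary random variables Y, R, A such that P(R = r, A = a) > 0 for every pair (r, a), sufficiency (Y conditionally independent of A given R) holds if and only if both groups have the same positive predictive value, P(Y = + | R = +, A = p) = P(Y = + | R = +, A = q), and the same negative predictive value, P(Y = − | R = −, A = p) = P(Y = − | R = −, A = q). -/
open MeasureTheory ENNReal

/-- Conditional probability `P(s | t) = μ(s ∩ t) / μ t`. -/
noncomputable def condProb {Ω : Type*} [MeasurableSpace Ω] (μ : Measure Ω)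
    (s t : Set Ω) : ℝ≥0∞ := μ (s ∩ t) / μ t

/-- Discrete conditional independence of `X` and `Y` given `Z`:
`P(X = x, Y = y | Z = z) = P(X = x | Z = z) · P(Y = y | Z = z)` whenever `P(Z = z) > 0`. -/
def CondIndepDiscrete {Ω α β γ : Type*} [MeasurableSpace Ω] (μ : Measure Ω)
    (X : Ω → α) (Y : Ω → β) (Z : Ω → γ) : Prop :=
  ∀ (x : α) (y : β) (z : γ), μ {ω | Z ω = z} ≠ 0 →
    condProb μ {ω | X ω = x ∧ Y ω = y} {ω | Z ω = z} =
      condProb μ {ω | X ω = x} {ω | Z ω = z} * condProb μ {ω | Y ω = y} {ω | Z ω = z}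

/-- Cancellation of multiplication in `ℝ≥0∞`. -/
lemma ennreal_mul_cancel {a b c : ℝ≥0∞} (h0 : a ≠ 0) (ht : a ≠ ⊤)
    (h : a * b = a * c) : b = c := by
  have := congrArg (fun x => a⁻¹ * x) h
  simpa [← mul_assoc, ENNReal.inv_mul_cancel h0 ht] using this

/-- `a / D = (b / D) * (c / D) ↔ a * D = b * c` for finite nonzero `D`. -/
lemma ennreal_div_mul_div {a b c D : ℝ≥0∞} (hD0 : D ≠ 0) (hDt : D ≠ ⊤) :
    a / D = b / D * (c / D) ↔ a * D = b * c := by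
  have h1 : b / D * (c / D) = (b * c) / (D * D) := by
    simp only [div_eq_mul_inv, ENNReal.mul_inv (Or.inl hD0) (Or.inr hD0)]
    ring
  rw [h1, ENNReal.div_eq_div_iff (mul_ne_zero hD0 hD0) (ENNReal.mul_ne_top hDt hDt) hD0 hDt]
  constructor
  · intro h
    have : D * (D * a) = D * (b * c) := by rw [← mul_assoc]; rw [h]
    have := ennreal_mul_cancel hD0 hDt this
    rw [mul_comm]; exact this
  · intro h
    calc D * D * a = D * (a * D) := by ring
      _ = D * (b * c) := by rw [h]

lemma semiring_q1 {α : Type*} [CommSemiring α] (x y z w : α) (h : x * w = y * z) :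
    x * (y + w) = y * (x + z) := by
  rw [mul_add, mul_add, h]; ring

lemma semiring_q2 {α : Type*} [CommSemiring α] (x y z w : α) (h : x * w = y * z) :
    z * (y + w) = w * (x + z) := by
  have h' : w * x = z * y := by rw [mul_comm w x, h, mul_comm y z]
  rw [mul_add, mul_add, ← h', mul_comm z w]

/-- The pure algebraic core of the theorem. -/
lemma algebra_main (m : Bool → Bool → Bool → ℝ≥0∞) (N : Bool → Bool → ℝ≥0∞)
    (D : Bool → ℝ≥0∞) (S : Bool → Bool → ℝ≥0∞)
    (hN : ∀ r a, N r a = m true r a + m false r a)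
    (hD : ∀ r, D r = N r true + N r false)
    (hS : ∀ y r, S y r = m y r true + m y r false)
    (hD0 : ∀ r, D r ≠ 0) (hDt : ∀ r, D r ≠ ⊤) (hmt : ∀ y r a, m y r a ≠ ⊤) :
    (∀ y a r, m y r a * D r = S y r * N r a) ↔
      ((N true false * m true true true = N true true * m true true false) ∧
       (N false false * m false false true = N false true * m false false false)) := by
  constructor
  · intro h
    have gen : ∀ y r, N r false * m y r true = N r true * m y r false := by
      intro y r
      have h1 := h y true r
      have h2 := h y false r
      have hc : D r * (N r false * m y r true) = D r * (N r true * m y r false) := by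
        calc D r * (N r false * m y r true) = (m y r true * D r) * N r false := by ring
          _ = (S y r * N r true) * N r false := by rw [h1]
          _ = (m y r false * D r) * N r true := by rw [h2]; ring
          _ = D r * (N r true * m y r false) := by ring
      exact ennreal_mul_cancel (hD0 r) (hDt r) hc
    exact ⟨gen true true, gen false false⟩
  · rintro ⟨h1, h2⟩
    have cross : ∀ r, m true r true * m false r false = m true r false * m false r true := by
      intro r
      cases r
      · -- r = false, use h2
        rw [hN, hN] at h2
        have e : m false false false * m false false true + m true false false * m false false true
            = m false false false * m false false true + m true false true * m false false false := by
          calc m false false false * m false false true + m true false false * m false false true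
              = (m true false false + m false false false) * m false false true := by ring
            _ = (m true false true + m false false true) * m false false false := h2
            _ = m false false false * m false false true + m true false true * m false false false := by
                ring
        exact (ENNReal.add_right_inj
          (ENNReal.mul_ne_top (hmt _ _ _) (hmt _ _ _))).mp e |>.symm
      · -- r = true, use h1
        rw [hN, hN] at h1
        have e : m true true true * m true true false + m true true true * m false true false
            = m true true true * m true true false + m true true false * m false true true := by
          calc m true true true * m true true false + m true true true * m false true false
              = (m true true false + m false true false) * m true true true := by ring
            _ = (m true true true + m false true true) * m true true false := h1
            _ = m true true true * m true true false + m true true false * m false true true := by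
                ring
        exact (ENNReal.add_right_inj
          (ENNReal.mul_ne_top (hmt _ _ _) (hmt _ _ _))).mp e
    have stepT : ∀ y r, m y r true * N r false = m y r false * N r true := by
      intro y r
      rw [hN, hN]
      cases y
      · exact semiring_q2 (m true r true) (m true r false) (m false r true)
          (m false r false) (cross r)
      · exact semiring_q1 (m true r true) (m true r false) (m false r true)
          (m false r false) (cross r)
    intro y a r
    rw [hD r, hS y r]
    cases a
    · rw [mul_add, ← stepT y r, add_mul]
    · rw [mul_add, stepT y r, add_mul]

/-- For binary `Y`, `R`, `A` (with `+ := true`, `− := false`, `p := true`, `q := false`)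
such that `P(R = r, A = a) > 0` for every pair, sufficiency (`Y ⊥ A ∣ R`) holds iff both
groups have the same positive predictive value `P(Y = + | R = +, A = a)` and the same
negative predictive value `P(Y = − | R = −, A = a)`. -/
theorem sufficiency_iff_equal_ppv_and_npv
    {Ω : Type*} [MeasurableSpace Ω] (μ : Measure Ω) [IsProbabilityMeasure μ]
    (Y R A : Ω → Bool) (hY : Measurable Y) (hR : Measurable R) (hA : Measurable A)
    (hpos : ∀ (r a : Bool), 0 < μ {ω | R ω = r ∧ A ω = a}) :
    CondIndepDiscrete μ Y A R ↔
      (condProb μ {ω | Y ω = true} {ω | R ω = true ∧ A ω = true} =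
          condProb μ {ω | Y ω = true} {ω | R ω = true ∧ A ω = false}) ∧
      (condProb μ {ω | Y ω = false} {ω | R ω = false ∧ A ω = true} =
          condProb μ {ω | Y ω = false} {ω | R ω = false ∧ A ω = false}) := by
  have split : ∀ (f : Ω → Bool), Measurable f → ∀ s : Set Ω,
      μ s = μ (s ∩ {ω | f ω = true}) + μ (s ∩ {ω | f ω = false}) := by
    intro f hf s
    have hd : s \ {ω | f ω = true} = s ∩ {ω | f ω = false} := by
      ext ω; simp [Set.mem_diff]
    have hp : f ⁻¹' {true} = {ω | f ω = true} := by ext ω; simp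
    rw [← measure_inter_add_diff s (hf (measurableSet_singleton true)), hp, hd]
  have hD0 : ∀ r, μ {ω | R ω = r} ≠ 0 := fun r =>
    (lt_of_lt_of_le (hpos r true) (measure_mono fun ω h => h.1)).ne'
  have hNdef : ∀ r a, μ {ω | R ω = r ∧ A ω = a}
      = μ {ω | Y ω = true ∧ R ω = r ∧ A ω = a} + μ {ω | Y ω = false ∧ R ω = r ∧ A ω = a} := by
    intro r a
    rw [split Y hY {ω | R ω = r ∧ A ω = a},
      show ({ω | R ω = r ∧ A ω = a} ∩ {ω | Y ω = true} : Set Ω) = {ω | Y ω = true ∧ R ω = r ∧ A ω = a} from by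
        ext ω; simp only [Set.mem_inter_iff, Set.mem_setOf_eq]; try tauto,
      show ({ω | R ω = r ∧ A ω = a} ∩ {ω | Y ω = false} : Set Ω) = {ω | Y ω = false ∧ R ω = r ∧ A ω = a} from by
        ext ω; simp only [Set.mem_inter_iff, Set.mem_setOf_eq]; try tauto]
  have hDdef : ∀ r, μ {ω | R ω = r}
      = μ {ω | R ω = r ∧ A ω = true} + μ {ω | R ω = r ∧ A ω = false} := by
    intro r
    rw [split A hA {ω | R ω = r},
      show ({ω | R ω = r} ∩ {ω | A ω = true} : Set Ω) = {ω | R ω = r ∧ A ω = true} from by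
        ext ω; simp only [Set.mem_inter_iff, Set.mem_setOf_eq]; try tauto,
      show ({ω | R ω = r} ∩ {ω | A ω = false} : Set Ω) = {ω | R ω = r ∧ A ω = false} from by
        ext ω; simp only [Set.mem_inter_iff, Set.mem_setOf_eq]; try tauto]
  have hSdef : ∀ y r, μ {ω | Y ω = y ∧ R ω = r}
      = μ {ω | Y ω = y ∧ R ω = r ∧ A ω = true} + μ {ω | Y ω = y ∧ R ω = r ∧ A ω = false} := by
    intro y r
    rw [split A hA {ω | Y ω = y ∧ R ω = r},
      show ({ω | Y ω = y ∧ R ω = r} ∩ {ω | A ω = true} : Set Ω)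
          = {ω | Y ω = y ∧ R ω = r ∧ A ω = true} from by
        ext ω; simp only [Set.mem_inter_iff, Set.mem_setOf_eq]; try tauto,
      show ({ω | Y ω = y ∧ R ω = r} ∩ {ω | A ω = false} : Set Ω)
          = {ω | Y ω = y ∧ R ω = r ∧ A ω = false} from by
        ext ω; simp only [Set.mem_inter_iff, Set.mem_setOf_eq]; try tauto]
  have ppv : ∀ y r, (condProb μ {ω | Y ω = y} {ω | R ω = r ∧ A ω = true} =
        condProb μ {ω | Y ω = y} {ω | R ω = r ∧ A ω = false}) ↔
      μ {ω | R ω = r ∧ A ω = false} * μ {ω | Y ω = y ∧ R ω = r ∧ A ω = true}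
        = μ {ω | R ω = r ∧ A ω = true} * μ {ω | Y ω = y ∧ R ω = r ∧ A ω = false} := by
    intro y r
    exact ENNReal.div_eq_div_iff (hpos r false).ne' (measure_ne_top μ _)
      (hpos r true).ne' (measure_ne_top μ _)
  have eset1 : ∀ y a r, ({ω | Y ω = y ∧ A ω = a} ∩ {ω | R ω = r} : Set Ω)
      = {ω | Y ω = y ∧ R ω = r ∧ A ω = a} := by
    intro y a r; ext ω; simp only [Set.mem_inter_iff, Set.mem_setOf_eq]; try tauto
  have eset2 : ∀ a r, ({ω | A ω = a} ∩ {ω | R ω = r} : Set Ω)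
      = {ω | R ω = r ∧ A ω = a} := by
    intro a r; ext ω; simp only [Set.mem_inter_iff, Set.mem_setOf_eq]; try tauto
  have ci : CondIndepDiscrete μ Y A R ↔
      ∀ y a r, μ {ω | Y ω = y ∧ R ω = r ∧ A ω = a} * μ {ω | R ω = r}
        = μ {ω | Y ω = y ∧ R ω = r} * μ {ω | R ω = r ∧ A ω = a} := by
    constructor
    · intro h y a r
      have hh := h y a r (hD0 r)
      unfold condProb at hh
      rw [eset1 y a r, eset2 a r] at hh
      exact (ennreal_div_mul_div (hD0 r) (measure_ne_top μ _)).mp hh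
    · intro h y a r hr
      unfold condProb
      rw [eset1 y a r, eset2 a r]
      exact (ennreal_div_mul_div (hD0 r) (measure_ne_top μ _)).mpr (h y a r)
  rw [ci, ppv true true, ppv false false]
  exact algebra_main (fun y r a => μ {ω | Y ω = y ∧ R ω = r ∧ A ω = a})
    (fun r a => μ {ω | R ω = r ∧ A ω = a}) (fun r => μ {ω | R ω = r})
    (fun y r => μ {ω | Y ω = y ∧ R ω = r}) hNdef hDdef hSdef hD0
    (fun r => measure_ne_top μ _) (fun y r a => measure_ne_top μ _)
end

section
/- For binary random variables Y, R, A such that P(Y = y, A = a) > 0 for every pair (y, a), separation (R conditionally independent of A given Y) holds if and only if both groups have the same false positive rate, P(R = + | Y = −, A = p) = P(R = + | Y = −, A = q), and the same false negative rate, P(R = − | Y = +, A = p) = P(R = − | Y = +, A = q). -/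
open MeasureTheory ENNReal

section Aux

open ENNReal

private lemma ennreal_ci_iff {e u v w : ℝ≥0∞} (he0 : e ≠ 0) (het : e ≠ ∞) :
    u / e = (v / e) * (w / e) ↔ e * u = v * w := by
  have hvw : (v / e) * (w / e) = (v * w) / (e * e) := by
    rw [div_eq_mul_inv, div_eq_mul_inv, div_eq_mul_inv,
      ENNReal.mul_inv (Or.inl he0) (Or.inl het)]
    ring
  rw [hvw, ENNReal.div_eq_div_iff (mul_ne_zero he0 he0) (ENNReal.mul_ne_top het het) he0 het,
    mul_assoc, ENNReal.mul_right_inj he0 het]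

private lemma bool_split {Ω : Type*} [MeasurableSpace Ω] (μ : MeasureTheory.Measure Ω)
    (s : Set Ω) (f : Ω → Bool) (hf : Measurable f) :
    μ (s ∩ {ω | f ω = true}) + μ (s ∩ {ω | f ω = false}) = μ s := by
  have ht : MeasurableSet {ω | f ω = true} := hf (MeasurableSet.singleton true)
  have hd : s ∩ {ω | f ω = false} = s \ {ω | f ω = true} := by
    ext ω
    simp [Set.mem_diff, Bool.not_eq_true]
  rw [hd, MeasureTheory.measure_inter_add_diff s ht]

end Aux

/-- For binary `Y`, `R`, `A` (with `+ := true`, `− := false`, `p := true`, `q := false`)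
such that `P(Y = y, A = a) > 0` for every pair, separation (`R ⊥ A ∣ Y`) holds iff both
groups have the same false positive rate `P(R = + | Y = −, A = a)` and the same false
negative rate `P(R = − | Y = +, A = a)`. -/
theorem separation_iff_equal_fpr_and_fnr
    {Ω : Type*} [MeasurableSpace Ω] (μ : Measure Ω) [IsProbabilityMeasure μ]
    (Y R A : Ω → Bool) (hY : Measurable Y) (hR : Measurable R) (hA : Measurable A)
    (hpos : ∀ (y a : Bool), 0 < μ {ω | Y ω = y ∧ A ω = a}) :
    CondIndepDiscrete μ R A Y ↔
      (condProb μ {ω | R ω = true} {ω | Y ω = false ∧ A ω = true} =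
          condProb μ {ω | R ω = true} {ω | Y ω = false ∧ A ω = false}) ∧
      (condProb μ {ω | R ω = false} {ω | Y ω = true ∧ A ω = true} =
          condProb μ {ω | R ω = false} {ω | Y ω = true ∧ A ω = false}) := by

  -- notation
  set S : Bool → Set Ω := fun r => {ω | R ω = r} with hS
  set T : Bool → Bool → Set Ω := fun y a => {ω | Y ω = y ∧ A ω = a} with hT
  set E : Bool → Set Ω := fun y => {ω | Y ω = y} with hE
  have hfin : ∀ s : Set Ω, μ s ≠ ∞ := fun s => MeasureTheory.measure_ne_top μ s
  have hT0 : ∀ y a, μ (T y a) ≠ 0 := fun y a => (hpos y a).ne'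
  have hE0 : ∀ y, μ (E y) ≠ 0 := by
    intro y h
    exact hT0 y true (MeasureTheory.measure_mono_null (fun ω hω => hω.1) h)
  -- set identities
  have hset1 : ∀ (x a z : Bool), {ω | R ω = x ∧ A ω = a} ∩ E z = S x ∩ T z a := by
    intro x a z; ext ω; simp only [hS, hT, hE, Set.mem_inter_iff, Set.mem_setOf_eq]; try tauto
  have hset2 : ∀ (a z : Bool), {ω | A ω = a} ∩ E z = T z a := by
    intro a z; ext ω; simp only [hT, hE, Set.mem_inter_iff, Set.mem_setOf_eq]; try tauto
  have hsetA : ∀ (z : Bool), (E z) ∩ {ω | A ω = true} = T z true ∧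
      (E z) ∩ {ω | A ω = false} = T z false := by
    intro z
    constructor <;> (ext ω; simp only [hT, hE, Set.mem_inter_iff, Set.mem_setOf_eq]; try tauto)
  have hsetSA : ∀ (x z : Bool), (S x ∩ E z) ∩ {ω | A ω = true} = S x ∩ T z true ∧
      (S x ∩ E z) ∩ {ω | A ω = false} = S x ∩ T z false := by
    intro x z
    constructor <;>
      (ext ω; simp only [hS, hT, hE, Set.mem_inter_iff, Set.mem_setOf_eq]; try tauto)
  -- splitting over A
  have hsplitE : ∀ z, μ (T z true) + μ (T z false) = μ (E z) := by
    intro z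
    have := bool_split μ (E z) A hA
    rwa [(hsetA z).1, (hsetA z).2] at this
  have hsplitS : ∀ x z, μ (S x ∩ T z true) + μ (S x ∩ T z false) = μ (S x ∩ E z) := by
    intro x z
    have := bool_split μ (S x ∩ E z) A hA
    rwa [(hsetSA x z).1, (hsetSA x z).2] at this
  -- splitting over R
  have hsplitR : ∀ z a, μ (S true ∩ T z a) + μ (S false ∩ T z a) = μ (T z a) := by
    intro z a
    have h1 : (T z a) ∩ {ω | R ω = true} = S true ∩ T z a := by
      ext ω; simp only [hS, hT, Set.mem_inter_iff, Set.mem_setOf_eq]; try tauto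
    have h2 : (T z a) ∩ {ω | R ω = false} = S false ∩ T z a := by
      ext ω; simp only [hS, hT, Set.mem_inter_iff, Set.mem_setOf_eq]; try tauto
    have := bool_split μ (T z a) R hR
    rwa [h1, h2] at this
  -- cross condition
  have hcross_iff : ∀ x z, (condProb μ (S x) (T z true) = condProb μ (S x) (T z false) ↔
      μ (T z false) * μ (S x ∩ T z true) = μ (T z true) * μ (S x ∩ T z false)) := by
    intro x z
    exact ENNReal.div_eq_div_iff (hT0 z false) (hfin _) (hT0 z true) (hfin _)
  -- cross is preserved under complementing x
  have hcross_compl : ∀ x z,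
      μ (T z false) * μ (S x ∩ T z true) = μ (T z true) * μ (S x ∩ T z false) →
      μ (T z false) * μ (S (!x) ∩ T z true) = μ (T z true) * μ (S (!x) ∩ T z false) := by
    intro x z h
    have key : μ (T z false) * μ (S x ∩ T z true) + μ (T z false) * μ (S (!x) ∩ T z true)
        = μ (T z true) * μ (S x ∩ T z false) + μ (T z true) * μ (S (!x) ∩ T z false) := by
      rw [← mul_add, ← mul_add]
      have h1 : μ (S x ∩ T z true) + μ (S (!x) ∩ T z true) = μ (T z true) := by
        cases x
        · rw [add_comm]; exact hsplitR z true
        · exact hsplitR z true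
      have h2 : μ (S x ∩ T z false) + μ (S (!x) ∩ T z false) = μ (T z false) := by
        cases x
        · rw [add_comm]; exact hsplitR z false
        · exact hsplitR z false
      rw [h1, h2, mul_comm]
    rw [h] at key
    exact (ENNReal.add_right_inj (ENNReal.mul_ne_top (hfin _) (hfin _))).mp key
  constructor
  · -- forward
    intro hci
    have key : ∀ x a z, μ (E z) * μ (S x ∩ T z a) = μ (S x ∩ E z) * μ (T z a) := by
      intro x a z
      have h := hci x a z (hE0 z)
      unfold condProb at h
      rw [hset1 x a z, hset2 a z] at h
      exact (ennreal_ci_iff (hE0 z) (hfin _)).mp h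
    have main : ∀ x z, condProb μ (S x) (T z true) = condProb μ (S x) (T z false) := by
      intro x z
      rw [hcross_iff x z]
      have h1 := key x true z
      have h2 := key x false z
      have : μ (E z) * (μ (T z false) * μ (S x ∩ T z true))
          = μ (E z) * (μ (T z true) * μ (S x ∩ T z false)) := by
        calc μ (E z) * (μ (T z false) * μ (S x ∩ T z true))
            = μ (T z false) * (μ (E z) * μ (S x ∩ T z true)) := by ring
          _ = μ (T z false) * (μ (S x ∩ E z) * μ (T z true)) := by rw [h1]
          _ = μ (T z true) * (μ (S x ∩ E z) * μ (T z false)) := by ring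
          _ = μ (T z true) * (μ (E z) * μ (S x ∩ T z false)) := by rw [h2]
          _ = μ (E z) * (μ (T z true) * μ (S x ∩ T z false)) := by ring
      exact (ENNReal.mul_right_inj (hE0 z) (hfin _)).mp this
    exact ⟨main true false, main false true⟩
  · -- backward
    rintro ⟨hfpr, hfnr⟩
    have cross : ∀ x z,
        μ (T z false) * μ (S x ∩ T z true) = μ (T z true) * μ (S x ∩ T z false) := by
      have c1 : μ (T false false) * μ (S true ∩ T false true)
          = μ (T false true) * μ (S true ∩ T false false) := (hcross_iff true false).mp hfpr
      have c2 : μ (T true false) * μ (S false ∩ T true true)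
          = μ (T true true) * μ (S false ∩ T true false) := (hcross_iff false true).mp hfnr
      intro x z
      cases x <;> cases z
      · exact hcross_compl true false c1
      · exact c2
      · exact c1
      · exact hcross_compl false true c2
    intro x a z hz
    unfold condProb
    rw [hset1 x a z, hset2 a z]
    rw [ennreal_ci_iff (hE0 z) (hfin _)]
    rw [← hsplitE z, ← hsplitS x z]
    have h := cross x z
    cases a
    · calc (μ (T z true) + μ (T z false)) * μ (S x ∩ T z false)
          = μ (S x ∩ T z false) * μ (T z false) + μ (T z true) * μ (S x ∩ T z false) := by
            ring
        _ = μ (S x ∩ T z false) * μ (T z false) + μ (T z false) * μ (S x ∩ T z true) := by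
            rw [← h]
        _ = (μ (S x ∩ T z true) + μ (S x ∩ T z false)) * μ (T z false) := by ring
    · calc (μ (T z true) + μ (T z false)) * μ (S x ∩ T z true)
          = μ (S x ∩ T z true) * μ (T z true) + μ (T z false) * μ (S x ∩ T z true) := by
            ring
        _ = μ (S x ∩ T z true) * μ (T z true) + μ (T z true) * μ (S x ∩ T z false) := by
            rw [h]
        _ = (μ (S x ∩ T z true) + μ (S x ∩ T z false)) * μ (T z true) := by ring
end

section
/- Sufficiency and separation are not incrementally conservative: there exist two joint probability distributions P and P' of binary random variables (A, Y, R) with identical marginal distribution of (A, Y), such that in each group the accuracy under P' is strictly greater than under P (P'(R = Y | A = a) > P(R = Y | A = a) for both values a of A), P satisfies both sufficiency and separation, yet P' satisfies neither sufficiency nor separation. A witness is given by group counts (true positives, false positives, false negatives, true negatives) of (10, 2, 3, 11) for group p and (20, 4, 6, 22) for group q under P, changed to (11, 2, 2, 11) and (21, 4, 5, 22) under P'. -/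
open MeasureTheory ENNReal

/-- Sample points are triples `(a, y, r)`: group membership `A`, true label `Y`,
prediction `R` (group `p := true`, positive `:= true`). -/
def Agrp (x : Bool × Bool × Bool) : Bool := x.1
def Ylbl (x : Bool × Bool × Bool) : Bool := x.2.1
def Rprd (x : Bool × Bool × Bool) : Bool := x.2.2

/-- The joint distribution `P` given by group counts (TP, FP, FN, TN) equal to
`(10, 2, 3, 11)` for group `p` and `(20, 4, 6, 22)` for group `q` (total count `78`). -/
noncomputable def muP : Measure (Bool × Bool × Bool) :=
  (10 / 78 : ℝ≥0∞) • Measure.dirac (true, true, true) +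
  (2 / 78 : ℝ≥0∞) • Measure.dirac (true, false, true) +
  (3 / 78 : ℝ≥0∞) • Measure.dirac (true, true, false) +
  (11 / 78 : ℝ≥0∞) • Measure.dirac (true, false, false) +
  (20 / 78 : ℝ≥0∞) • Measure.dirac (false, true, true) +
  (4 / 78 : ℝ≥0∞) • Measure.dirac (false, false, true) +
  (6 / 78 : ℝ≥0∞) • Measure.dirac (false, true, false) +
  (22 / 78 : ℝ≥0∞) • Measure.dirac (false, false, false)

/-- The more accurate joint distribution `P'` given by group counts (TP, FP, FN, TN)
equal to `(11, 2, 2, 11)` for group `p` and `(21, 4, 5, 22)` for group `q`. -/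
noncomputable def muP' : Measure (Bool × Bool × Bool) :=
  (11 / 78 : ℝ≥0∞) • Measure.dirac (true, true, true) +
  (2 / 78 : ℝ≥0∞) • Measure.dirac (true, false, true) +
  (2 / 78 : ℝ≥0∞) • Measure.dirac (true, true, false) +
  (11 / 78 : ℝ≥0∞) • Measure.dirac (true, false, false) +
  (21 / 78 : ℝ≥0∞) • Measure.dirac (false, true, true) +
  (4 / 78 : ℝ≥0∞) • Measure.dirac (false, false, true) +
  (5 / 78 : ℝ≥0∞) • Measure.dirac (false, true, false) +
  (22 / 78 : ℝ≥0∞) • Measure.dirac (false, false, false)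

/- ### Auxiliary lemmas -/
open scoped Classical

lemma frac78 (a b : ℝ≥0∞) (hb : b ≠ 0) (hb' : b ≠ ∞) : (a/78)/(b/78) = a/b := by
  rw [div_eq_mul_inv, ENNReal.inv_div (Or.inr hb') (Or.inr hb), div_eq_mul_inv, div_eq_mul_inv,
    mul_assoc, ← mul_assoc (78:ℝ≥0∞)⁻¹, ENNReal.inv_mul_cancel (by norm_num) (by norm_num),
    one_mul, ← div_eq_mul_inv]

lemma fracmul (a b n : ℝ≥0∞) (h0 : n ≠ 0) (h1 : n ≠ ∞) : (a/n)*(b/n) = (a*b)/(n*n) := by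
  rw [div_eq_mul_inv, div_eq_mul_inv, div_eq_mul_inv, ENNReal.mul_inv (Or.inl h0) (Or.inl h1)]
  ring

lemma keyEq (a b1 b2 c : ℝ≥0∞) (hc : c ≠ 0) (hc' : c ≠ ∞) (h : a * c = b1 * b2) :
    (a/78)/(c/78) = (b1/78)/(c/78) * ((b2/78)/(c/78)) := by
  rw [frac78 _ _ hc hc', frac78 _ _ hc hc', frac78 _ _ hc hc', fracmul _ _ _ hc hc',
    ENNReal.div_eq_div_iff (mul_ne_zero hc hc) (ENNReal.mul_ne_top hc' hc') hc hc', ← h]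
  ring

lemma keyLt (a b c : ℝ≥0∞) (hc : c ≠ 0) (hc' : c ≠ ∞) (h : a < b) :
    (a/78)/(c/78) < (b/78)/(c/78) := by
  rw [frac78 _ _ hc hc', frac78 _ _ hc hc',
    ENNReal.div_lt_iff (Or.inl hc) (Or.inl hc'), ENNReal.div_mul_cancel hc hc']
  exact h

lemma muP_apply (s : Set (Bool × Bool × Bool)) :
    muP s = (if (true, true, true) ∈ s then (10:ℝ≥0∞)/78 else 0)
      + (if (true, false, true) ∈ s then (2:ℝ≥0∞)/78 else 0)
      + (if (true, true, false) ∈ s then (3:ℝ≥0∞)/78 else 0)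
      + (if (true, false, false) ∈ s then (11:ℝ≥0∞)/78 else 0)
      + (if (false, true, true) ∈ s then (20:ℝ≥0∞)/78 else 0)
      + (if (false, false, true) ∈ s then (4:ℝ≥0∞)/78 else 0)
      + (if (false, true, false) ∈ s then (6:ℝ≥0∞)/78 else 0)
      + (if (false, false, false) ∈ s then (22:ℝ≥0∞)/78 else 0) := by
  simp only [muP, Measure.coe_add, Measure.coe_smul, Pi.add_apply, Pi.smul_apply,
    Measure.dirac_apply, Set.indicator_apply, smul_eq_mul, mul_ite, mul_one, mul_zero,
    Pi.one_apply]

lemma muP'_apply (s : Set (Bool × Bool × Bool)) :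
    muP' s = (if (true, true, true) ∈ s then (11:ℝ≥0∞)/78 else 0)
      + (if (true, false, true) ∈ s then (2:ℝ≥0∞)/78 else 0)
      + (if (true, true, false) ∈ s then (2:ℝ≥0∞)/78 else 0)
      + (if (true, false, false) ∈ s then (11:ℝ≥0∞)/78 else 0)
      + (if (false, true, true) ∈ s then (21:ℝ≥0∞)/78 else 0)
      + (if (false, false, true) ∈ s then (4:ℝ≥0∞)/78 else 0)
      + (if (false, true, false) ∈ s then (5:ℝ≥0∞)/78 else 0)
      + (if (false, false, false) ∈ s then (22:ℝ≥0∞)/78 else 0) := by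
  simp only [muP', Measure.coe_add, Measure.coe_smul, Pi.add_apply, Pi.smul_apply,
    Measure.dirac_apply, Set.indicator_apply, smul_eq_mul, mul_ite, mul_one, mul_zero,
    Pi.one_apply]

/-- Sufficiency and separation are not incrementally conservative: `P := muP` and
`P' := muP'` are probability distributions of binary `(A, Y, R)` with identical marginal
distribution of `(A, Y)`, in each group the accuracy `P'(R = Y | A = a)` strictly exceeds
`P(R = Y | A = a)`, `P` satisfies both sufficiency (`Y ⊥ A ∣ R`) and separation
(`R ⊥ A ∣ Y`), yet `P'` satisfies neither.  In particular such a pair of joint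
distributions exists. -/
theorem sufficiency_and_separation_not_incrementally_conservative :
    IsProbabilityMeasure muP ∧ IsProbabilityMeasure muP' ∧
    (∀ (a y : Bool), muP {x | Agrp x = a ∧ Ylbl x = y} = muP' {x | Agrp x = a ∧ Ylbl x = y}) ∧
    (∀ a : Bool, condProb muP {x | Rprd x = Ylbl x} {x | Agrp x = a} <
        condProb muP' {x | Rprd x = Ylbl x} {x | Agrp x = a}) ∧
    CondIndepDiscrete muP Ylbl Agrp Rprd ∧
    CondIndepDiscrete muP Rprd Agrp Ylbl ∧
    ¬ CondIndepDiscrete muP' Ylbl Agrp Rprd ∧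
    ¬ CondIndepDiscrete muP' Rprd Agrp Ylbl := by
  refine ⟨⟨?_⟩, ⟨?_⟩, ?_, ?_, ?_, ?_, ?_, ?_⟩
  · simp only [muP_apply, Set.mem_univ, if_true, ENNReal.div_add_div_same]
    norm_num
    rw [ENNReal.div_self (by norm_num) (by norm_num)]
  · simp only [muP'_apply, Set.mem_univ, if_true, ENNReal.div_add_div_same]
    norm_num
    rw [ENNReal.div_self (by norm_num) (by norm_num)]
  · intro a y
    cases a <;> cases y <;>
      simp [muP_apply, muP'_apply, Agrp, Ylbl, ENNReal.div_add_div_same] <;> norm_num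
  · intro a
    cases a <;>
      (simp only [condProb, muP_apply, muP'_apply, Set.mem_inter_iff, Set.mem_setOf_eq,
        Agrp, Ylbl, Rprd]
       norm_num [ENNReal.div_add_div_same])
    · exact keyLt 42 43 52 (by norm_num) (by norm_num) (by norm_num)
    · exact keyLt 21 22 26 (by norm_num) (by norm_num) (by norm_num)
  · intro x y z _
    cases x <;> cases y <;> cases z <;>
      (simp only [condProb, muP_apply, Set.mem_inter_iff, Set.mem_setOf_eq, Agrp, Ylbl, Rprd]
       norm_num [ENNReal.div_add_div_same])
    · exact keyEq 22 33 28 42 (by norm_num) (by norm_num) (by norm_num)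
    · exact keyEq 4 6 24 36 (by norm_num) (by norm_num) (by norm_num)
    · exact keyEq 11 33 14 42 (by norm_num) (by norm_num) (by norm_num)
    · exact keyEq 2 6 12 36 (by norm_num) (by norm_num) (by norm_num)
    · exact keyEq 6 9 28 42 (by norm_num) (by norm_num) (by norm_num)
    · exact keyEq 20 30 24 36 (by norm_num) (by norm_num) (by norm_num)
    · exact keyEq 3 9 14 42 (by norm_num) (by norm_num) (by norm_num)
    · exact keyEq 10 30 12 36 (by norm_num) (by norm_num) (by norm_num)
  · intro x y z _
    cases x <;> cases y <;> cases z <;>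
      (simp only [condProb, muP_apply, Set.mem_inter_iff, Set.mem_setOf_eq, Agrp, Ylbl, Rprd]
       norm_num [ENNReal.div_add_div_same])
    · exact keyEq 22 33 26 39 (by norm_num) (by norm_num) (by norm_num)
    · exact keyEq 6 9 26 39 (by norm_num) (by norm_num) (by norm_num)
    · exact keyEq 11 33 13 39 (by norm_num) (by norm_num) (by norm_num)
    · exact keyEq 3 9 13 39 (by norm_num) (by norm_num) (by norm_num)
    · exact keyEq 4 6 26 39 (by norm_num) (by norm_num) (by norm_num)
    · exact keyEq 20 30 26 39 (by norm_num) (by norm_num) (by norm_num)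
    · exact keyEq 2 6 13 39 (by norm_num) (by norm_num) (by norm_num)
    · exact keyEq 10 30 13 39 (by norm_num) (by norm_num) (by norm_num)
  · intro h
    have h1 := h true true true (by
      simp only [muP'_apply, Set.mem_setOf_eq, Rprd]
      norm_num [ENNReal.div_add_div_same])
    simp only [condProb, muP'_apply, Set.mem_inter_iff, Set.mem_setOf_eq, Agrp, Ylbl, Rprd] at h1
    norm_num [ENNReal.div_add_div_same] at h1
    rw [frac78 _ _ (by norm_num) (by norm_num), frac78 _ _ (by norm_num) (by norm_num),
      frac78 _ _ (by norm_num) (by norm_num), fracmul _ _ _ (by norm_num) (by norm_num),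
      ENNReal.div_eq_div_iff (by norm_num) (by norm_num) (by norm_num) (by norm_num)] at h1
    norm_num at h1
  · intro h
    have h1 := h true true true (by
      simp only [muP'_apply, Set.mem_setOf_eq, Ylbl]
      norm_num [ENNReal.div_add_div_same])
    simp only [condProb, muP'_apply, Set.mem_inter_iff, Set.mem_setOf_eq, Agrp, Ylbl, Rprd] at h1
    norm_num [ENNReal.div_add_div_same] at h1
    rw [frac78 _ _ (by norm_num) (by norm_num), frac78 _ _ (by norm_num) (by norm_num),
      frac78 _ _ (by norm_num) (by norm_num), fracmul _ _ _ (by norm_num) (by norm_num),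
      ENNReal.div_eq_div_iff (by norm_num) (by norm_num) (by norm_num) (by norm_num)] at h1
    norm_num at h1
end
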